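/- Let m > 1, c > 0, and K₀ > 0. On the open set Ω = { ξ ∈ ℝ : c − K₀ e^{(m−1)ξ/m} > 0 }, the function f(ξ) = ( c − K₀ e^{(m−1)ξ/m} )^{1/(m−1)} is differentiable, f^m is differentiable, and f satisfies the traveling-wave ordinary differential equation (f^m)'(ξ) − f^m(ξ) = −c f(ξ) for every ξ ∈ Ω. -/

import Mathlib

open Real Set

noncomputable section

/-- **Traveling wave ODE (Section 4.2).** Let `m > 1`, `c > 0`, `K₀ > 0`.  On the open
set `Ω = {ξ : c - K₀ e^{(m-1)ξ/m} > 0}`, the function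
`f(ξ) = (c - K₀ e^{(m-1)ξ/m})^{1/(m-1)}` is differentiable, `f^m` is differentiable,
and `f` satisfies the traveling-wave ODE `(f^m)'(ξ) - f^m(ξ) = -c f(ξ)` on `Ω`. -/
theorem travelingWave_ODE
    (m c K₀ : ℝ) (hm : 1 < m) (hc : 0 < c) (hK₀ : 0 < K₀) :
    ∀ ξ : ℝ, 0 < c - K₀ * Real.exp ((m - 1) * ξ / m) →
      DifferentiableAt ℝ
        (fun x : ℝ => (c - K₀ * Real.exp ((m - 1) * x / m)) ^ (1 / (m - 1))) ξ ∧
      DifferentiableAt ℝ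
        (fun x : ℝ => ((c - K₀ * Real.exp ((m - 1) * x / m)) ^ (1 / (m - 1))) ^ m) ξ ∧
      deriv (fun x : ℝ => ((c - K₀ * Real.exp ((m - 1) * x / m)) ^ (1 / (m - 1))) ^ m) ξ
          - ((c - K₀ * Real.exp ((m - 1) * ξ / m)) ^ (1 / (m - 1))) ^ m
        = -(c * (c - K₀ * Real.exp ((m - 1) * ξ / m)) ^ (1 / (m - 1))) := by
  intro ξ hξ
  have hm1 : m - 1 ≠ 0 := by nlinarith
  have hm0 : (m : ℝ) ≠ 0 := by nlinarith
  set e : ℝ := Real.exp ((m - 1) * ξ / m) with he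
  have he0 : 0 < e := Real.exp_pos _
  set g : ℝ := c - K₀ * e with hgdef
  have hg0 : 0 < g := hξ
  have hgne : g ≠ 0 := ne_of_gt hg0
  -- derivative of the inner function
  have hinner : HasDerivAt (fun x : ℝ => c - K₀ * Real.exp ((m - 1) * x / m))
      (-(K₀ * e * ((m - 1) / m))) ξ := by
    have h1 : HasDerivAt (fun x : ℝ => (m - 1) * x / m) ((m - 1) / m) ξ := by
      simpa using ((hasDerivAt_id ξ).const_mul (m - 1)).div_const m
    have h2 : HasDerivAt (fun x : ℝ => Real.exp ((m - 1) * x / m)) (e * ((m - 1) / m)) ξ :=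
      (Real.hasDerivAt_exp _).comp ξ h1
    have h3 := (h2.const_mul K₀).const_sub c
    simpa [mul_assoc] using h3
  -- derivative of f
  have hf : HasDerivAt (fun x : ℝ => (c - K₀ * Real.exp ((m - 1) * x / m)) ^ (1 / (m - 1)))
      ((-(K₀ * e * ((m - 1) / m))) * (1 / (m - 1)) * g ^ (1 / (m - 1) - 1)) ξ :=
    hinner.rpow_const (Or.inl hgne)
  have hfne : g ^ (1 / (m - 1)) ≠ 0 := ne_of_gt (Real.rpow_pos_of_pos hg0 _)
  -- derivative of f^m
  have hF : HasDerivAt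
      (fun x : ℝ => ((c - K₀ * Real.exp ((m - 1) * x / m)) ^ (1 / (m - 1))) ^ m)
      (((-(K₀ * e * ((m - 1) / m))) * (1 / (m - 1)) * g ^ (1 / (m - 1) - 1)) * m *
        (g ^ (1 / (m - 1))) ^ (m - 1)) ξ :=
    hf.rpow_const (Or.inl hfne)
  refine ⟨hf.differentiableAt, hF.differentiableAt, ?_⟩
  rw [hF.deriv]
  -- simplify rpow expressions
  have h1 : (g ^ (1 / (m - 1))) ^ (m - 1) = g := by
    rw [← Real.rpow_mul hg0.le, one_div, inv_mul_cancel₀ hm1, Real.rpow_one]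
  have h2 : g ^ (1 / (m - 1) - 1) * g = g ^ (1 / (m - 1)) := by
    rw [← Real.rpow_add_one hgne]
    ring_nf
  have h3 : (g ^ (1 / (m - 1))) ^ m = g ^ (1 / (m - 1)) * g := by
    rw [← Real.rpow_mul hg0.le]
    have : 1 / (m - 1) * m = 1 / (m - 1) + 1 := by field_simp; ring
    rw [this, Real.rpow_add_one hgne]
  rw [h3]
  have key : -(K₀ * e * ((m - 1) / m)) * (1 / (m - 1)) * g ^ (1 / (m - 1) - 1) * m *
      (g ^ (1 / (m - 1))) ^ (m - 1) = -(K₀ * e) * g ^ (1 / (m - 1)) := by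
    rw [h1, ← h2]
    field_simp
  rw [key]
  have : c = K₀ * e + g := by rw [hgdef]; ring
  rw [this]
  ring
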